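/- A Vandermonde matrix V with entries V_{ij} = x_i^{j-1} (1 ≤ i,j ≤ n) built from nodes satisfying 0 < x_1 < x_2 < ... < x_n has all its minors positive, i.e., V is strictly totally positive. -/
import Mathlib

open Polynomial Finset

/-- Key root-counting lemma: a nonzero real polynomial has fewer distinct positive
roots than it has nonzero terms. -/
lemma posRoots_card : ∀ (d : ℕ) (p : ℝ[X]), p ≠ 0 → p.natDegree ≤ d →
    ((p.roots.toFinset.filter (fun x => 0 < x)).card + 1 ≤ p.support.card) := by
  intro d
  induction d with
  | zero =>
    intro p hp hd
    have h0 : p.natDegree = 0 := Nat.le_zero.mp hd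
    obtain ⟨c, rfl⟩ := Polynomial.natDegree_eq_zero.mp h0
    have hc : c ≠ 0 := fun h => hp (by simp [h])
    simp [Polynomial.roots_C, Polynomial.support_C hc]
  | succ d ih =>
    intro p hp hd
    rcases Nat.eq_zero_or_pos p.natDegree with h0 | h0
    · obtain ⟨c, rfl⟩ := Polynomial.natDegree_eq_zero.mp h0
      have hc : c ≠ 0 := fun h => hp (by simp [h])
      simp [Polynomial.roots_C, Polynomial.support_C hc]
    rcases eq_or_ne (p.coeff 0) 0 with hc0 | hc0
    · -- p = divX p * X
      have hq : p.divX ≠ 0 := by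
        intro h
        apply hp
        have := p.divX_mul_X_add
        rw [h, hc0] at this
        simpa using this.symm
      have hfact : p.divX * X = p := by
        have := p.divX_mul_X_add
        rwa [hc0, map_zero, add_zero] at this
      have hdeg : p.divX.natDegree ≤ d := by
        rw [Polynomial.natDegree_divX_eq_natDegree_tsub_one]
        omega
      have hroots : p.roots = p.divX.roots + {(0 : ℝ)} := by
        conv_lhs => rw [← hfact]
        rw [Polynomial.roots_mul (by rw [hfact]; exact hp), Polynomial.roots_X]
      have hfilter : p.roots.toFinset.filter (fun x => 0 < x)
          = p.divX.roots.toFinset.filter (fun x => 0 < x) := by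
        rw [hroots, Multiset.toFinset_add, Finset.filter_union]
        have : ({(0:ℝ)} : Multiset ℝ).toFinset.filter (fun x => 0 < x) = ∅ := by
          simp [Finset.filter_singleton]
        rw [this, Finset.union_empty]
      have hsupp : p.support = p.divX.support.image (· + 1) := by
        ext m
        simp only [Polynomial.mem_support_iff, Finset.mem_image]
        constructor
        · intro hm
          have hm1 : m ≠ 0 := fun h => hm (h ▸ hc0)
          exact ⟨m - 1, by rw [Polynomial.coeff_divX]; rwa [Nat.sub_add_cancel (Nat.one_le_iff_ne_zero.mpr hm1)],
            Nat.sub_add_cancel (Nat.one_le_iff_ne_zero.mpr hm1)⟩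
        · rintro ⟨n, hn, rfl⟩
          rwa [Polynomial.coeff_divX] at hn
      have hcard : p.support.card = p.divX.support.card := by
        rw [hsupp]
        exact Finset.card_image_of_injective _ (add_left_injective 1)
      rw [hfilter, hcard]
      exact ih p.divX hq hdeg
    · -- coeff 0 ≠ 0, use derivative + Rolle
      have hq' : Polynomial.derivative p ≠ 0 := by
        intro h
        have := Polynomial.eq_C_of_derivative_eq_zero h
        rw [this] at h0
        simp at h0
      have hdeg' : (Polynomial.derivative p).natDegree ≤ d := by
        have := Polynomial.natDegree_derivative_lt h0.ne'
        omega
      -- support of derivative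
      have hsupp' : (Polynomial.derivative p).support.image (· + 1) = p.support.erase 0 := by
        ext m
        simp only [Finset.mem_image, Polynomial.mem_support_iff, Finset.mem_erase]
        constructor
        · rintro ⟨n, hn, rfl⟩
          rw [Polynomial.coeff_derivative] at hn
          refine ⟨by omega, fun h => hn (by simp [h])⟩
        · rintro ⟨hm0, hm⟩
          refine ⟨m - 1, ?_, Nat.sub_add_cancel (Nat.one_le_iff_ne_zero.mpr hm0)⟩
          rw [Polynomial.coeff_derivative, Nat.sub_add_cancel (Nat.one_le_iff_ne_zero.mpr hm0)]
          exact mul_ne_zero hm (by positivity)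
      have h0mem : (0:ℕ) ∈ p.support := Polynomial.mem_support_iff.mpr hc0
      have hcardsupp : (Polynomial.derivative p).support.card = p.support.card - 1 := by
        rw [← Finset.card_image_of_injective _ (add_left_injective 1), hsupp',
          Finset.card_erase_of_mem h0mem]
      have hsupp1 : 1 ≤ p.support.card := Finset.card_pos.mpr ⟨0, h0mem⟩
      have ihh := ih (Polynomial.derivative p) hq' hdeg'
      set s := p.roots.toFinset.filter (fun x => 0 < x) with hs
      set t := (Polynomial.derivative p).roots.toFinset.filter (fun x => 0 < x) with ht
      have hst : s.card ≤ (t \ s).card + 1 := by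
        apply Finset.card_le_diff_of_interleaved
        intro x hx y hy hxy _
        rw [hs, Finset.mem_filter, Multiset.mem_toFinset, Polynomial.mem_roots hp] at hx hy
        obtain ⟨z, hz1, hz2⟩ := exists_deriv_eq_zero hxy p.continuousOn (hx.1.trans hy.1.symm)
        refine ⟨z, ?_, hz1.1, hz1.2⟩
        rw [ht, Finset.mem_filter, Multiset.mem_toFinset, Polynomial.mem_roots hq']
        refine ⟨?_, lt_trans hx.2 hz1.1⟩
        rwa [Polynomial.IsRoot, ← Polynomial.deriv]
      have hts : (t \ s).card ≤ t.card := Finset.card_le_card Finset.sdiff_subset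
      omega

/-- Generalized Vandermonde determinants with positive increasing nodes and
strictly increasing exponents are positive. -/
lemma genVandermonde_det_pos : ∀ (k : ℕ) (y : Fin k → ℝ) (a : Fin k → ℕ),
    (∀ i, 0 < y i) → StrictMono y → StrictMono a →
    0 < (Matrix.of fun i j => y i ^ a j).det := by
  intro k
  induction k with
  | zero => intro y a _ _ _; simp [Matrix.det_fin_zero]
  | succ n ih =>
    intro y a hy hmy hma
    -- the matrix with the last node replaced by `t`
    set G : ℝ → Matrix (Fin (n + 1)) (Fin (n + 1)) ℝ :=
      fun t => Matrix.of fun i j => (if i = Fin.last n then t else y i) ^ a j with hG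
    -- cofactors along the last row
    set minor : Fin (n + 1) → ℝ :=
      fun j => (Matrix.of fun (i i' : Fin n) =>
        y (Fin.castSucc i) ^ a (j.succAbove i')).det with hminor
    set coef : Fin (n + 1) → ℝ := fun j => (-1 : ℝ) ^ ((n : ℕ) + (j : ℕ)) * minor j with hcoef
    set p : ℝ[X] := ∑ j : Fin (n + 1), C (coef j) * X ^ (a j) with hp
    have heval : ∀ t : ℝ, p.eval t = (G t).det := by
      intro t
      rw [Matrix.det_succ_row (G t) (Fin.last n)]
      rw [hp, Polynomial.eval_finset_sum]
      refine Finset.sum_congr rfl fun j _ => ?_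
      have hsub : (G t).submatrix (Fin.last n).succAbove j.succAbove
          = Matrix.of fun (i i' : Fin n) => y (Fin.castSucc i) ^ a (j.succAbove i') := by
        ext i i'
        simp only [Matrix.submatrix_apply, hG, Matrix.of_apply, Fin.succAbove_last]
        rw [if_neg (Fin.castSucc_lt_last i).ne]
      rw [hsub]
      simp only [Polynomial.eval_mul, Polynomial.eval_C, Polynomial.eval_pow, Polynomial.eval_X,
        hG, Matrix.of_apply, if_pos rfl, hcoef, if_true, Fin.val_last]
      ring
    -- the determinant we want is `p.eval (y (last))`
    have hMG : (Matrix.of fun i j => y i ^ a j : Matrix (Fin (n+1)) (Fin (n+1)) ℝ)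
        = G (y (Fin.last n)) := by
      ext i j
      simp only [hG, Matrix.of_apply]
      split_ifs with h
      · rw [h]
      · rfl
    -- roots at the first n nodes
    have hroot : ∀ i : Fin n, p.eval (y (Fin.castSucc i)) = 0 := by
      intro i
      rw [heval]
      apply Matrix.det_zero_of_row_eq (i := Fin.castSucc i) (j := Fin.last n)
        (Fin.castSucc_lt_last i).ne
      ext j
      simp only [hG, Matrix.of_apply, if_pos rfl, if_neg (Fin.castSucc_lt_last i).ne, if_true]
    -- leading coefficient is positive by the induction hypothesis
    have hminorpos : 0 < minor (Fin.last n) := by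
      rw [hminor]
      apply ih (fun i => y (Fin.castSucc i)) (fun i' => a ((Fin.last n).succAbove i'))
      · intro i; exact hy _
      · exact fun i j h => hmy (by simpa using h)
      · intro i j h
        exact hma (by simpa [Fin.succAbove_last] using (Fin.castSucc_lt_castSucc_iff.mpr h))
    have hcoeflast : 0 < coef (Fin.last n) := by
      rw [hcoef]
      simp only [Fin.val_last]
      rw [Even.neg_one_pow ⟨n, rfl⟩, one_mul]
      exact hminorpos
    -- coefficients of p
    have hpcoeff : ∀ j : Fin (n + 1), p.coeff (a j) = coef j := by
      intro j
      rw [hp, Polynomial.finset_sum_coeff]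
      rw [Finset.sum_eq_single j]
      · simp [Polynomial.coeff_C_mul, Polynomial.coeff_X_pow]
      · intro j' _ hj'
        simp only [Polynomial.coeff_C_mul, Polynomial.coeff_X_pow]
        rw [if_neg (fun h => hj' (hma.injective h.symm)), mul_zero]
      · intro h; exact absurd (Finset.mem_univ j) h
    have hpne : p ≠ 0 := fun h => by
      have := hpcoeff (Fin.last n)
      rw [h] at this
      simp at this
      exact hcoeflast.ne this
    -- support bound
    have hsupp : p.support.card ≤ n + 1 := by
      have : p.support ⊆ Finset.univ.image a := by
        intro m hm
        rw [Polynomial.mem_support_iff] at hm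
        by_contra hmem
        apply hm
        rw [hp, Polynomial.finset_sum_coeff]
        apply Finset.sum_eq_zero
        intro j _
        simp only [Polynomial.coeff_C_mul, Polynomial.coeff_X_pow]
        rw [if_neg, mul_zero]
        intro h
        exact hmem (Finset.mem_image.mpr ⟨j, Finset.mem_univ j, h.symm⟩)
      calc p.support.card ≤ (Finset.univ.image a).card := Finset.card_le_card this
        _ ≤ (Finset.univ : Finset (Fin (n+1))).card := Finset.card_image_le
        _ = n + 1 := by simp
    -- natDegree and leading coefficient
    have hdegle : p.natDegree ≤ a (Fin.last n) := by
      rw [hp]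
      apply Polynomial.natDegree_sum_le_of_forall_le
      intro j _
      exact (Polynomial.natDegree_C_mul_X_pow_le _ _).trans (hma.monotone (Fin.le_last j))
    have hdeg : p.natDegree = a (Fin.last n) :=
      le_antisymm hdegle (Polynomial.le_natDegree_of_ne_zero
        (by rw [hpcoeff]; exact hcoeflast.ne'))
    -- positive roots
    set S := p.roots.toFinset.filter (fun x => 0 < x) with hS
    have hScard : S.card ≤ n := by
      have h1 := posRoots_card (a (Fin.last n)) p hpne hdegle
      rw [hS]
      omega
    set T := (Finset.univ : Finset (Fin n)).image (fun i => y (Fin.castSucc i)) with hT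
    have hTS : T ⊆ S := by
      intro z hz
      rw [hT, Finset.mem_image] at hz
      obtain ⟨i, _, rfl⟩ := hz
      rw [hS, Finset.mem_filter, Multiset.mem_toFinset, Polynomial.mem_roots hpne]
      exact ⟨hroot i, hy _⟩
    have hTcard : T.card = n := by
      rw [hT, Finset.card_image_of_injective _
        (fun i j h => by simpa using hmy.injective h), Finset.card_univ, Fintype.card_fin]
    -- any further positive root exceeding all of T gives a contradiction
    have hnew : ∀ z : ℝ, 0 < z → (∀ i : Fin n, y (Fin.castSucc i) < z) →
        p.eval z = 0 → False := by
      intro z hz hza hzr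
      have hzT : z ∉ T := by
        rw [hT, Finset.mem_image]
        rintro ⟨i, _, h⟩
        exact absurd h (hza i).ne
      have : insert z T ⊆ S := by
        apply Finset.insert_subset _ hTS
        rw [hS, Finset.mem_filter, Multiset.mem_toFinset, Polynomial.mem_roots hpne]
        exact ⟨hzr, hz⟩
      have := Finset.card_le_card this
      rw [Finset.card_insert_of_notMem hzT, hTcard] at this
      omega
    -- the determinant is nonzero
    have hne : p.eval (y (Fin.last n)) ≠ 0 := by
      intro h
      exact hnew (y (Fin.last n)) (hy _) (fun i => hmy (Fin.castSucc_lt_last i)) h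
    -- and positive
    rw [hMG, ← heval]
    rcases lt_or_ge 0 (p.eval (y (Fin.last n))) with h | h
    · exact h
    have hlt : p.eval (y (Fin.last n)) < 0 := lt_of_le_of_ne h hne
    exfalso
    have hlc : 0 < p.leadingCoeff := by
      rw [Polynomial.leadingCoeff, hdeg, hpcoeff]; exact hcoeflast
    -- find a point to the right where p is positive
    obtain ⟨z, hz1, hz2⟩ : ∃ z, y (Fin.last n) < z ∧ 0 < p.eval z := by
      rcases lt_or_ge 0 p.degree with hd | hd
      · have ht := Polynomial.tendsto_atTop_of_leadingCoeff_nonneg p hd hlc.le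
        have h1 := ht.eventually_gt_atTop 0
        have h2 := Filter.eventually_gt_atTop (y (Fin.last n))
        obtain ⟨z, hz⟩ := (h2.and h1).exists
        exact ⟨z, hz.1, hz.2⟩
      · exfalso
        have : p = C (p.coeff 0) := Polynomial.eq_C_of_degree_le_zero hd
        have h0 : p.natDegree = 0 := Polynomial.natDegree_eq_zero_iff_degree_le_zero.mpr hd
        rw [this] at hlt
        rw [Polynomial.eval_C] at hlt
        have : p.coeff 0 = p.leadingCoeff := by
          rw [Polynomial.leadingCoeff, h0]
        rw [this] at hlt
        exact absurd hlt (not_lt.mpr hlc.le)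
    -- IVT gives a root beyond the last node
    obtain ⟨c, hc1, hc2⟩ : ∃ c ∈ Set.Ioo (y (Fin.last n)) z, p.eval c = 0 := by
      have hcont : ContinuousOn (fun x => p.eval x) (Set.Icc (y (Fin.last n)) z) :=
        p.continuousOn
      have := intermediate_value_Ioo hz1.le hcont
      have h0mem : (0:ℝ) ∈ Set.Ioo (p.eval (y (Fin.last n))) (p.eval z) := ⟨hlt, hz2⟩
      obtain ⟨c, hc, hceq⟩ := this h0mem
      exact ⟨c, hc, hceq⟩
    exact hnew c (lt_trans (hy _) hc1.1)
      (fun i => lt_trans (hmy (Fin.castSucc_lt_last i)) hc1.1) hc2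

/-- A matrix is strictly totally positive if every minor (determinant of every
square submatrix taken with strictly increasing row and column indices) is positive. -/
def StrictlyTotallyPositive {n : ℕ} (A : Matrix (Fin n) (Fin n) ℝ) : Prop :=
  ∀ (k : ℕ) (f g : Fin k → Fin n), StrictMono f → StrictMono g →
    0 < ((A.submatrix f g).det)

theorem vandermonde_strictlyTotallyPositive (n : ℕ) (x : Fin n → ℝ)
    (hpos : ∀ i, 0 < x i) (hmono : StrictMono x) :
    StrictlyTotallyPositive (Matrix.vandermonde x) := by
  intro k f g hf hg
  have : (Matrix.vandermonde x).submatrix f g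
      = Matrix.of fun i j => (x (f i)) ^ ((g j : ℕ)) := by
    ext i j
    simp [Matrix.vandermonde_apply]
  rw [this]
  exact genVandermonde_det_pos k (fun i => x (f i)) (fun j => (g j : ℕ))
    (fun i => hpos (f i)) (hmono.comp hf)
    (fun i j h => by exact_mod_cast hg h)
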